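/- There is a bijection between the set of parking functions of length n and the set of pairs (σ, b), where σ is a permutation of {1,...,n} and b = (b_1,...,b_n) is a sequence of nonnegative integers satisfying: (i) b_1 ≤ b_2 ≤ ... ≤ b_{n-1} ≤ b_n = n; (ii) b_k ≥ k for k = 1,...,n-1; (iii) if b_{s+1} = b_s then σ(s) < σ(s+1). -/

import Mathlib

namespace ParkingAux

/-- `cOf f i = n - f i`, the complemented parking function. -/
def cOf {n : ℕ} (f : Fin n → Fin n) : Fin n → ℕ := fun i => n - (f i : ℕ)

lemma card_filter_val_lt (n m : ℕ) :
    ((Finset.univ : Finset (Fin n)).filter fun s : Fin n => (s : ℕ) < m).card = min m n := by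
  classical
  rw [← Finset.card_range (min m n)]
  apply Finset.card_bij (fun (s : Fin n) _ => (s : ℕ))
  · intro a ha
    simp only [Finset.mem_filter, Finset.mem_univ, true_and] at ha
    simp only [Finset.mem_range, lt_min_iff]
    exact ⟨ha, a.isLt⟩
  · intro a _ b _ h; exact Fin.ext h
  · intro j hj
    simp only [Finset.mem_range, lt_min_iff] at hj
    exact ⟨⟨j, hj.2⟩, by simp [hj.1], rfl⟩

lemma card_filter_perm {n : ℕ} (σ : Equiv.Perm (Fin n)) (p : Fin n → Prop) [DecidablePred p] :
    ((Finset.univ : Finset (Fin n)).filter fun s : Fin n => p (σ s)).card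
      = (Finset.univ.filter p).card := by
  apply Finset.card_bij (fun s _ => σ s)
  · intro a ha
    simp only [Finset.mem_filter, Finset.mem_univ, true_and] at *
    exact ha
  · intro a _ b _ h; exact σ.injective h
  · intro j hj
    refine ⟨σ.symm j, ?_, by simp⟩
    simp only [Finset.mem_filter, Finset.mem_univ, true_and] at *
    simpa using hj

lemma mono_of_adj {n : ℕ} {b : Fin n → ℕ}
    (h : ∀ s : Fin n, ∀ hs : (s : ℕ) + 1 < n, b s ≤ b ⟨(s : ℕ) + 1, hs⟩) :
    ∀ s t : Fin n, s ≤ t → b s ≤ b t := by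
  have key : ∀ d : ℕ, ∀ s : Fin n, ∀ hd : (s : ℕ) + d < n, b s ≤ b ⟨(s : ℕ) + d, hd⟩ := by
    intro d
    induction d with
    | zero => intro s hd; simp
    | succ d ih =>
      intro s hd
      have h1 : (s : ℕ) + d < n := by omega
      exact (ih s h1).trans (h ⟨(s : ℕ) + d, h1⟩ hd)
  intro s t hst
  have hst' : (s : ℕ) ≤ (t : ℕ) := hst
  have h2 : (s : ℕ) + ((t : ℕ) - (s : ℕ)) < n := by have := t.isLt; omega
  have he : (⟨(s : ℕ) + ((t : ℕ) - (s : ℕ)), h2⟩ : Fin n) = t := by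
    apply Fin.ext; simp; omega
  have := key ((t : ℕ) - (s : ℕ)) s h2
  rwa [he] at this

lemma tie_of_adj {n : ℕ} {b : Fin n → ℕ} {σ : Equiv.Perm (Fin n)}
    (hm : ∀ s : Fin n, ∀ hs : (s : ℕ) + 1 < n, b s ≤ b ⟨(s : ℕ) + 1, hs⟩)
    (ht : ∀ s : Fin n, ∀ hs : (s : ℕ) + 1 < n,
      b ⟨(s : ℕ) + 1, hs⟩ = b s → σ s < σ ⟨(s : ℕ) + 1, hs⟩) :
    ∀ s t : Fin n, s < t → b s = b t → σ s < σ t := by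
  have mono := mono_of_adj hm
  have key : ∀ d : ℕ, ∀ s : Fin n, ∀ hd : (s : ℕ) + (d + 1) < n,
      b s = b ⟨(s : ℕ) + (d + 1), hd⟩ → σ s < σ ⟨(s : ℕ) + (d + 1), hd⟩ := by
    intro d
    induction d with
    | zero => intro s hd hb; exact ht s hd hb.symm
    | succ d ih =>
      intro s hd hb
      have h1 : (s : ℕ) + (d + 1) < n := by omega
      have hmid1 : b s ≤ b ⟨(s : ℕ) + (d + 1), h1⟩ :=
        mono s ⟨(s : ℕ) + (d + 1), h1⟩ (by rw [Fin.le_def]; simp)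
      have hmid2 : b ⟨(s : ℕ) + (d + 1), h1⟩ ≤ b ⟨(s : ℕ) + (d + 1) + 1, hd⟩ :=
        hm ⟨(s : ℕ) + (d + 1), h1⟩ hd
      have e1 : b s = b ⟨(s : ℕ) + (d + 1), h1⟩ := by
        refine le_antisymm hmid1 ?_
        rw [hb]; exact hmid2
      exact lt_trans (ih s h1 e1)
        (ht ⟨(s : ℕ) + (d + 1), h1⟩ hd (hb.symm.trans e1))
  intro s t hst hb
  have hst' : (s : ℕ) < (t : ℕ) := hst
  have h2 : (s : ℕ) + (((t : ℕ) - (s : ℕ) - 1) + 1) < n := by have := t.isLt; omega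
  have he : (⟨(s : ℕ) + (((t : ℕ) - (s : ℕ) - 1) + 1), h2⟩ : Fin n) = t := by
    apply Fin.ext; simp; omega
  have := key ((t : ℕ) - (s : ℕ) - 1) s h2 (by rw [he]; exact hb)
  rwa [he] at this

lemma forward_ii {n : ℕ} {f : Fin n → Fin n}
    (hf : ∀ k : Fin n, (k : ℕ) + 1 ≤ (Finset.univ.filter fun i => f i ≤ k).card)
    (k : Fin n) :
    (k : ℕ) + 1 ≤ (cOf f ∘ Tuple.sort (cOf f)) k := by
  classical
  by_contra hlt
  push_neg at hlt
  set m := (cOf f ∘ Tuple.sort (cOf f)) k with hm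
  have hkn := k.isLt
  have hmn : m < n := by omega
  -- step 1: k+1 ≤ #{s | c (σ s) ≤ m}
  have h1 : (k : ℕ) + 1 ≤
      (Finset.univ.filter fun s : Fin n => cOf f (Tuple.sort (cOf f) s) ≤ m).card := by
    have hsub : (Finset.univ.filter fun s : Fin n => (s : ℕ) < (k : ℕ) + 1) ⊆
        (Finset.univ.filter fun s : Fin n => cOf f (Tuple.sort (cOf f) s) ≤ m) := by
      intro s hs
      simp only [Finset.mem_filter, Finset.mem_univ, true_and] at *
      have hsk : s ≤ k := by rw [Fin.le_def]; omega
      exact Tuple.monotone_sort (cOf f) hsk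
    have := Finset.card_le_card hsub
    rwa [card_filter_val_lt, min_eq_left (by omega)] at this
  -- step 2: reindex by the permutation
  have h2 : (Finset.univ.filter fun s : Fin n => cOf f (Tuple.sort (cOf f) s) ≤ m).card
      = (Finset.univ.filter fun i : Fin n => cOf f i ≤ m).card :=
    card_filter_perm (Tuple.sort (cOf f)) (fun i => cOf f i ≤ m)
  -- step 3: complement is a parking-condition set
  have h3 := hf ⟨n - m - 1, by omega⟩
  have h3' : n - m ≤ (Finset.univ.filter fun i => f i ≤ (⟨n - m - 1, by omega⟩ : Fin n)).card := by
    have : ((⟨n - m - 1, by omega⟩ : Fin n) : ℕ) = n - m - 1 := rfl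
    omega
  have h4 : (Finset.univ.filter fun i => f i ≤ (⟨n - m - 1, by omega⟩ : Fin n)).card
      = (Finset.univ.filter fun i : Fin n => ¬ (cOf f i ≤ m)).card := by
    congr 1
    apply Finset.filter_congr
    intro i _
    have := (f i).isLt
    simp only [cOf, Fin.le_def]
    constructor <;> intro h <;> omega
  have h5 := Finset.card_filter_add_card_filter_not
    (s := (Finset.univ : Finset (Fin n))) (p := fun i : Fin n => cOf f i ≤ m)
  rw [Finset.card_univ, Fintype.card_fin] at h5
  omega

lemma backward_parking {n : ℕ} (σ : Equiv.Perm (Fin n)) (b : Fin n → ℕ) (f : Fin n → Fin n)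
    (hfb : ∀ i, (f i : ℕ) = n - b (σ⁻¹ i))
    (hii : ∀ k : Fin n, (k : ℕ) + 1 ≤ b k) (k : Fin n) :
    (k : ℕ) + 1 ≤ (Finset.univ.filter fun i => f i ≤ k).card := by
  classical
  have hkn := k.isLt
  have h2 : (Finset.univ.filter fun s : Fin n => f (σ s) ≤ k).card
      = (Finset.univ.filter fun i : Fin n => f i ≤ k).card :=
    card_filter_perm σ (fun i => f i ≤ k)
  -- complement bound
  have hsub : (Finset.univ.filter fun s : Fin n => ¬ (f (σ s) ≤ k)) ⊆
      (Finset.univ.filter fun s : Fin n => (s : ℕ) < n - (k : ℕ) - 1) := by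
    intro s hs
    simp only [Finset.mem_filter, Finset.mem_univ, true_and] at *
    rw [Fin.le_def] at hs
    have hbs := hii s
    have hfs := hfb (σ s)
    simp only [Equiv.Perm.inv_def, Equiv.symm_apply_apply] at hfs
    omega
  have hcomp := Finset.card_le_card hsub
  rw [card_filter_val_lt] at hcomp
  have h5 := Finset.card_filter_add_card_filter_not
    (s := (Finset.univ : Finset (Fin n))) (p := fun s : Fin n => f (σ s) ≤ k)
  rw [Finset.card_univ, Fintype.card_fin] at h5
  have hmin : min (n - (k : ℕ) - 1) n = n - (k : ℕ) - 1 := by omega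
  omega

lemma forward_props {n : ℕ} (hn : 0 < n) (f : Fin n → Fin n)
    (hf : ∀ k : Fin n, (k : ℕ) + 1 ≤ (Finset.univ.filter fun i => f i ≤ k).card) :
    (∀ s : Fin n, ∀ h : (s : ℕ) + 1 < n,
      (cOf f ∘ Tuple.sort (cOf f)) s ≤ (cOf f ∘ Tuple.sort (cOf f)) ⟨(s : ℕ) + 1, h⟩) ∧
    (cOf f ∘ Tuple.sort (cOf f)) ⟨n - 1, Nat.sub_lt hn one_pos⟩ = n ∧
    (∀ k : Fin n, (k : ℕ) + 1 ≤ (cOf f ∘ Tuple.sort (cOf f)) k) ∧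
    (∀ s : Fin n, ∀ h : (s : ℕ) + 1 < n,
      (cOf f ∘ Tuple.sort (cOf f)) ⟨(s : ℕ) + 1, h⟩ = (cOf f ∘ Tuple.sort (cOf f)) s →
        Tuple.sort (cOf f) s < Tuple.sort (cOf f) ⟨(s : ℕ) + 1, h⟩) := by
  have hii : ∀ k : Fin n, (k : ℕ) + 1 ≤ (cOf f ∘ Tuple.sort (cOf f)) k := forward_ii hf
  refine ⟨?_, ?_, hii, ?_⟩
  · intro s hs
    exact Tuple.monotone_sort (cOf f) (show s ≤ ⟨(s : ℕ) + 1, hs⟩ by rw [Fin.le_def]; simp)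
  · have hlow := hii ⟨n - 1, Nat.sub_lt hn one_pos⟩
    have hup : (cOf f ∘ Tuple.sort (cOf f)) ⟨n - 1, Nat.sub_lt hn one_pos⟩ ≤ n := Nat.sub_le _ _
    have : ((⟨n - 1, Nat.sub_lt hn one_pos⟩ : Fin n) : ℕ) = n - 1 := rfl
    omega
  · intro s h heq
    have hts := (Tuple.eq_sort_iff (f := cOf f) (σ := Tuple.sort (cOf f))).mp rfl
    exact hts.2 s ⟨(s : ℕ) + 1, h⟩ (by rw [Fin.lt_def]; simp) heq.symm

end ParkingAux

open ParkingAux in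
/-- There is a bijection between the set of parking functions of length `n`
(functions `f : Fin n → Fin n`, 0-indexed, with `#{i | f i ≤ k} ≥ k+1` for all `k`)
and the set of pairs `(σ, b)` where `σ` is a permutation of `{1,…,n}` and
`b = (b_1,…,b_n)` is a sequence of nonnegative integers (here `b : Fin n → ℕ`,
0-indexed, so `b_k` is `b ⟨k-1⟩`) satisfying:
(i) `b_1 ≤ b_2 ≤ … ≤ b_{n-1} ≤ b_n = n`;
(ii) `b_k ≥ k` for `k = 1,…,n-1`;
(iii) if `b_{s+1} = b_s` then `σ(s) < σ(s+1)`. -/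
theorem parkingFunctions_equiv_perm_bData (n : ℕ) (hn : 0 < n) :
    Nonempty (
      {f : Fin n → Fin n //
        ∀ k : Fin n, (k : ℕ) + 1 ≤ (Finset.univ.filter fun i => f i ≤ k).card} ≃
      {p : Equiv.Perm (Fin n) × (Fin n → ℕ) //
        (∀ s : Fin n, ∀ h : (s : ℕ) + 1 < n, p.2 s ≤ p.2 ⟨(s : ℕ) + 1, h⟩) ∧
        p.2 ⟨n - 1, Nat.sub_lt hn one_pos⟩ = n ∧
        (∀ k : Fin n, (k : ℕ) + 1 ≤ p.2 k) ∧
        (∀ s : Fin n, ∀ h : (s : ℕ) + 1 < n,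
          p.2 ⟨(s : ℕ) + 1, h⟩ = p.2 s → p.1 s < p.1 ⟨(s : ℕ) + 1, h⟩)}) := by
  constructor
  refine
    { toFun := fun f => ⟨(Tuple.sort (cOf f.1), cOf f.1 ∘ Tuple.sort (cOf f.1)),
        forward_props hn f.1 f.2⟩
      invFun := fun p => ⟨fun i => ⟨n - p.1.2 (p.1.1⁻¹ i), by
          have h1 := p.2.2.2.1 (p.1.1⁻¹ i); omega⟩,
        backward_parking p.1.1 p.1.2 _ (fun i => rfl) p.2.2.2.1⟩
      left_inv := ?_
      right_inv := ?_ }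
  · rintro ⟨f, hf⟩
    apply Subtype.ext
    funext i
    apply Fin.ext
    show n - (cOf f ∘ Tuple.sort (cOf f)) ((Tuple.sort (cOf f))⁻¹ i) = (f i : ℕ)
    simp only [Function.comp_apply, Equiv.Perm.inv_def, Equiv.apply_symm_apply, cOf]
    have := (f i).isLt
    omega
  · rintro ⟨⟨σ, b⟩, hmono, hlast, hii, htie⟩
    dsimp only at hmono hlast hii htie
    have hmax : ∀ s : Fin n, b s ≤ n := by
      intro s
      have hle : s ≤ (⟨n - 1, Nat.sub_lt hn one_pos⟩ : Fin n) := by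
        rw [Fin.le_def]; have := s.isLt; simp; omega
      have := mono_of_adj hmono s _ hle
      have e : ((⟨n - 1, Nat.sub_lt hn one_pos⟩ : Fin n) : ℕ) = n - 1 := rfl
      omega
    apply Subtype.ext
    have hc : cOf (fun i => (⟨n - b (σ⁻¹ i), by
        have h1 := hii (σ⁻¹ i); omega⟩ : Fin n)) = fun i => b (σ⁻¹ i) := by
      funext i
      simp only [cOf, Fin.val_mk]
      have := hmax (σ⁻¹ i)
      omega
    show (Tuple.sort _, cOf _ ∘ Tuple.sort (cOf _)) = (σ, b)
    rw [hc]
    have hg : (fun i => b (σ⁻¹ i)) ∘ σ = b := by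
      funext s; simp
    have hsort : σ = Tuple.sort (fun i => b (σ⁻¹ i)) := by
      rw [Tuple.eq_sort_iff]
      constructor
      · rw [hg]
        intro x y hxy
        exact mono_of_adj hmono x y hxy
      · intro i j hij he
        simp only [Equiv.Perm.inv_def, Equiv.symm_apply_apply] at he
        exact tie_of_adj hmono htie i j hij he
    rw [← hsort, hg]
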